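/- In the simplified dictionary-LASSO setting with the block partition T₁,…,T_J of T₀ᶜ, one has Σ_{j≥2} ‖(Zh)_{T_j}‖ ≤ 3·√(s/l)·‖(Zh)_{T₀}‖. -/

import Mathlib

open scoped BigOperators
open Matrix MeasureTheory ProbabilityTheory

/-- Euclidean norm of a vector in `ℝ^n`. -/
noncomputable def vnorm {n : ℕ} (v : Fin n → ℝ) : ℝ := Real.sqrt (∑ i, v i ^ 2)

/-- ℓ¹ norm. -/
noncomputable def vnorm1 {n : ℕ} (v : Fin n → ℝ) : ℝ := ∑ i, |v i|

/-- ℓ∞ norm. -/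
noncomputable def vnormInf {n : ℕ} (v : Fin n → ℝ) : ℝ := ⨆ i, |v i|

/-- Restriction of a vector to an index set: coordinates outside `T` are set to zero. -/
noncomputable def restr {m : ℕ} (T : Finset (Fin m)) (w : Fin m → ℝ) : Fin m → ℝ :=
  fun i => if i ∈ T then w i else 0

/-- Support of a vector. -/
noncomputable def suppSet {m : ℕ} (w : Fin m → ℝ) : Finset (Fin m) :=
  Finset.univ.filter (fun i => w i ≠ 0)

/-- `𝓗(Y, k)`: all vectors `Y v` with `v` having at most `k` nonzero coordinates. -/
noncomputable def sparseCone {q t : ℕ} (Y : Matrix (Fin q) (Fin t) ℝ) (k : ℕ) :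
    Set (Fin q → ℝ) :=
  {w | ∃ v : Fin t → ℝ, (Finset.univ.filter fun i => v i ≠ 0).card ≤ k ∧ w = Y.mulVec v}

/-- `ρ⁺_{Ψ,Y}(k)` (the `l₁ = 0` version). -/
noncomputable def rhoPlus0 {n q t : ℕ} (Ψ : Matrix (Fin n) (Fin q) ℝ)
    (Y : Matrix (Fin q) (Fin t) ℝ) (k : ℕ) : ℝ :=
  sSup {x | ∃ w ∈ sparseCone Y k, w ≠ 0 ∧ x = vnorm (Ψ.mulVec w) ^ 2 / vnorm w ^ 2}

/-- `ρ⁻_{Ψ,Y}(k)` (the `l₁ = 0` version). -/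
noncomputable def rhoMinus0 {n q t : ℕ} (Ψ : Matrix (Fin n) (Fin q) ℝ)
    (Y : Matrix (Fin q) (Fin t) ℝ) (k : ℕ) : ℝ :=
  sInf {x | ∃ w ∈ sparseCone Y k, w ≠ 0 ∧ x = vnorm (Ψ.mulVec w) ^ 2 / vnorm w ^ 2}

/-- `ρ⁺_{Ψ,Y}(l₁, k)`. -/
noncomputable def rhoPlus {n l₁ q t : ℕ} (Ψ : Matrix (Fin n) (Fin (l₁ + q)) ℝ)
    (Y : Matrix (Fin q) (Fin t) ℝ) (k : ℕ) : ℝ :=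
  sSup {x | ∃ (u : Fin l₁ → ℝ) (w : Fin q → ℝ), w ∈ sparseCone Y k ∧ Fin.append u w ≠ 0 ∧
    x = vnorm (Ψ.mulVec (Fin.append u w)) ^ 2 / vnorm (Fin.append u w) ^ 2}

/-- `ρ⁻_{Ψ,Y}(l₁, k)`. -/
noncomputable def rhoMinus {n l₁ q t : ℕ} (Ψ : Matrix (Fin n) (Fin (l₁ + q)) ℝ)
    (Y : Matrix (Fin q) (Fin t) ℝ) (k : ℕ) : ℝ :=
  sInf {x | ∃ (u : Fin l₁ → ℝ) (w : Fin q → ℝ), w ∈ sparseCone Y k ∧ Fin.append u w ≠ 0 ∧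
    x = vnorm (Ψ.mulVec (Fin.append u w)) ^ 2 / vnorm (Fin.append u w) ^ 2}

/-- Column concatenation `[P Q]`. -/
def hcat {n a b : ℕ} (P : Matrix (Fin n) (Fin a) ℝ) (Q : Matrix (Fin n) (Fin b) ℝ) :
    Matrix (Fin n) (Fin (a + b)) ℝ :=
  Matrix.of fun i => Fin.append (P i) (Q i)

/-- Smallest singular value: `min_{‖v‖ = 1} ‖Z v‖`. -/
noncomputable def sigmaMin {m r : ℕ} (Z : Matrix (Fin m) (Fin r) ℝ) : ℝ :=
  sInf {x | ∃ v : Fin r → ℝ, vnorm v = 1 ∧ x = vnorm (Z.mulVec v)}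

/-- Largest singular value: `max_{‖v‖ = 1} ‖Z v‖`. -/
noncomputable def sigmaMax {m r : ℕ} (Z : Matrix (Fin m) (Fin r) ℝ) : ℝ :=
  sSup {x | ∃ v : Fin r → ℝ, vnorm v = 1 ∧ x = vnorm (Z.mulVec v)}

section Helpers

lemma vnorm_sq_eq {k : ℕ} (v : Fin k → ℝ) : vnorm v ^ 2 = ∑ i, v i ^ 2 := by
  rw [vnorm, Real.sq_sqrt (Finset.sum_nonneg fun i _ => sq_nonneg _)]

lemma vnorm_restr_eq {k : ℕ} (T : Finset (Fin k)) (v : Fin k → ℝ) :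
    vnorm (restr T v) = Real.sqrt (∑ i ∈ T, v i ^ 2) := by
  unfold vnorm restr
  congr 1
  rw [← Finset.sum_subset (Finset.subset_univ T) (fun i _ hi => by simp [hi])]
  exact Finset.sum_congr rfl fun i hi => by simp [hi]

end Helpers

/-- In the simplified dictionary-LASSO setting with the block partition
`T₁, …, T_J` of `T₀ᶜ`, one has `Σ_{j≥2} ‖(Zh)_{T_j}‖ ≤ 3·√(s/l)·‖(Zh)_{T₀}‖`. -/
theorem statement2 {n r m : ℕ} (hn : 0 < n) (hr : 0 < r) (hm : 0 < m)
    (X : Matrix (Fin n) (Fin r) ℝ) (Z : Matrix (Fin m) (Fin r) ℝ)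
    (hZrank : Z.rank = r)
    (Zp : Matrix (Fin r) (Fin m) ℝ) (hZp : Zp = (Zᵀ * Z)⁻¹ * Zᵀ)
    (y : Fin n → ℝ) (lam : ℝ) (hlam : 0 < lam)
    (βstar βhat : Fin r → ℝ)
    (hmin : ∀ β : Fin r → ℝ,
      (1 / 2) * vnorm (X.mulVec βhat - y) ^ 2 + lam * vnorm1 (Z.mulVec βhat) ≤
        (1 / 2) * vnorm (X.mulVec β - y) ^ 2 + lam * vnorm1 (Z.mulVec β))
    (h : Fin r → ℝ) (hh : h = βhat - βstar)
    (T₀ : Finset (Fin m)) (hT₀ : T₀ = suppSet (Z.mulVec βstar))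
    (s : ℕ) (hs : s = T₀.card) (hs1 : 1 ≤ s)
    (hfeas : vnormInf (Zpᵀ.mulVec (Xᵀ.mulVec (X.mulVec βstar - y))) < lam / 2)
    -- the block partition of `T₀ᶜ` into `T 1, …, T J`
    (l : ℕ) (hl : 0 < l) (J : ℕ) (hJ : 1 ≤ J) (T : ℕ → Finset (Fin m))
    (hUnion : (Finset.Icc 1 J).biUnion T = T₀ᶜ)
    (hDisj : ∀ i ∈ Finset.Icc 1 J, ∀ j ∈ Finset.Icc 1 J, i ≠ j → Disjoint (T i) (T j))
    (hCard : ∀ j, 1 ≤ j → j < J → (T j).card = l)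
    (hCardLast : (T J).card ≤ l)
    (hOrder : ∀ j, 2 ≤ j → j ≤ J → ∀ a ∈ T j, ∀ b ∈ T (j - 1),
      |Z.mulVec h a| ≤ |Z.mulVec h b|) :
    ∑ j ∈ Finset.Icc 2 J, vnorm (restr (T j) (Z.mulVec h)) ≤
      3 * Real.sqrt ((s : ℝ) / (l : ℝ)) * vnorm (restr T₀ (Z.mulVec h)) := by
  classical
  set g : Fin m → ℝ := Z.mulVec h with hg
  set u : Fin n → ℝ := X.mulVec βstar - y with hu
  set q : Fin m → ℝ := Zpᵀ.mulVec (Xᵀ.mulVec u) with hqdef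
  set A : ℝ := ∑ i ∈ T₀, |g i| with hA
  set B : ℝ := ∑ i ∈ T₀ᶜ, |g i| with hB
  set N : ℝ := vnorm (restr T₀ g) with hN
  -- basic positivity
  have hll : (0:ℝ) < l := by exact_mod_cast hl
  have hsl : (0:ℝ) < Real.sqrt l := Real.sqrt_pos.mpr hll
  have hA0 : 0 ≤ A := Finset.sum_nonneg fun i _ => abs_nonneg _
  -- invertibility of ZᵀZ and Zp * Z = 1
  have hker : LinearMap.ker (Matrix.mulVecLin Z) = ⊥ := by
    have h1 := LinearMap.finrank_range_add_finrank_ker (Matrix.mulVecLin Z)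
    rw [Matrix.rank] at hZrank
    rw [hZrank, Module.finrank_pi, Fintype.card_fin] at h1
    have h0 : Module.finrank ℝ (LinearMap.ker (Matrix.mulVecLin Z)) = 0 := by omega
    exact Submodule.finrank_eq_zero.mp h0
  have hUnit : IsUnit (Zᵀ * Z) := by
    rw [← Matrix.mulVec_injective_iff_isUnit]
    have hk2 : LinearMap.ker (Matrix.mulVecLin (Zᵀ * Z)) = ⊥ := by
      rw [Matrix.ker_mulVecLin_transpose_mul_self]; exact hker
    have := LinearMap.ker_eq_bot.mp hk2
    rwa [Matrix.coe_mulVecLin] at this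
  have hZpZ : Zp * Z = 1 := by
    rw [hZp, Matrix.mul_assoc]
    exact Matrix.nonsing_inv_mul _ ((Matrix.isUnit_iff_isUnit_det _).mp hUnit)
  have hZpg : Zp.mulVec g = h := by
    rw [hg, Matrix.mulVec_mulVec, hZpZ, Matrix.one_mulVec]
  -- the dual feasibility bound
  have hq : ∀ i, |q i| ≤ lam / 2 := by
    intro i
    have h1 : |q i| ≤ vnormInf q := by
      unfold vnormInf
      exact le_ciSup (f := fun j => |q j|) (Finite.bddAbove_range _) i
    exact h1.trans hfeas.le
  -- inner product identity
  have hip : g ⬝ᵥ q = (X.mulVec h) ⬝ᵥ u := by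
    rw [hqdef, Matrix.dotProduct_mulVec g, Matrix.vecMul_transpose, hZpg,
        Matrix.dotProduct_mulVec h, Matrix.vecMul_transpose]
  have hsumabs : ∑ i, |g i| = A + B := (Finset.sum_add_sum_compl T₀ _).symm
  have hipbound : |g ⬝ᵥ q| ≤ (lam / 2) * (A + B) := by
    rw [← hsumabs]
    calc |g ⬝ᵥ q| = |∑ i, g i * q i| := rfl
      _ ≤ ∑ i, |g i * q i| := Finset.abs_sum_le_sum_abs _ _
      _ ≤ ∑ i, |g i| * (lam / 2) := by
          refine Finset.sum_le_sum fun i _ => ?_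
          rw [abs_mul]
          exact mul_le_mul_of_nonneg_left (hq i) (abs_nonneg _)
      _ = (lam / 2) * ∑ i, |g i| := by rw [← Finset.sum_mul, mul_comm]
  -- decompositions
  have hβhat : βhat = βstar + h := by rw [hh]; abel
  have hXβhat : X.mulVec βhat - y = X.mulVec h + u := by
    rw [hβhat, Matrix.mulVec_add, hu]; abel
  have hZβhat : Z.mulVec βhat = Z.mulVec βstar + g := by
    rw [hβhat, Matrix.mulVec_add, hg]
  have hzero : ∀ i ∈ T₀ᶜ, Z.mulVec βstar i = 0 := by
    intro i hi
    rw [Finset.mem_compl, hT₀, suppSet, Finset.mem_filter] at hi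
    push_neg at hi
    exact hi (Finset.mem_univ i)
  have hl1star : vnorm1 (Z.mulVec βstar) = ∑ i ∈ T₀, |Z.mulVec βstar i| := by
    unfold vnorm1
    rw [← Finset.sum_add_sum_compl T₀ (fun i => |Z.mulVec βstar i|)]
    have hz : ∑ i ∈ T₀ᶜ, |Z.mulVec βstar i| = 0 :=
      Finset.sum_eq_zero fun i hi => by rw [hzero i hi, abs_zero]
    rw [hz, add_zero]
  have hl1hat : vnorm1 (Z.mulVec βstar) - A + B ≤ vnorm1 (Z.mulVec βhat) := by
    rw [hl1star]
    unfold vnorm1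
    rw [hZβhat, ← Finset.sum_add_sum_compl T₀ (fun i => |(Z.mulVec βstar + g) i|)]
    have h1 : (∑ i ∈ T₀, |Z.mulVec βstar i|) - A ≤ ∑ i ∈ T₀, |(Z.mulVec βstar + g) i| := by
      rw [hA, ← Finset.sum_sub_distrib]
      refine Finset.sum_le_sum fun i _ => ?_
      simp only [Pi.add_apply]
      have h2 := abs_add_le (Z.mulVec βstar i + g i) (-(g i))
      simp only [add_neg_cancel_right, abs_neg] at h2
      linarith
    have h2 : ∑ i ∈ T₀ᶜ, |(Z.mulVec βstar + g) i| = B := by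
      rw [hB]
      refine Finset.sum_congr rfl fun i hi => ?_
      simp [hzero i hi]
    rw [h2]
    linarith
  -- the quadratic expansion and optimality
  have hsq : vnorm (X.mulVec βhat - y) ^ 2
      = (∑ i, (X.mulVec h) i ^ 2) + 2 * ((X.mulVec h) ⬝ᵥ u) + ∑ i, u i ^ 2 := by
    rw [hXβhat, vnorm_sq_eq]
    simp only [Pi.add_apply, dotProduct, Finset.mul_sum]
    rw [← Finset.sum_add_distrib, ← Finset.sum_add_distrib]
    exact Finset.sum_congr rfl fun i _ => by ring
  have hopt := hmin βstar
  rw [← hu, hsq, vnorm_sq_eq u, ← hip] at hopt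
  have hXh2 : (0:ℝ) ≤ ∑ i, (X.mulVec h) i ^ 2 := Finset.sum_nonneg fun i _ => sq_nonneg _
  have hl1mul : lam * (vnorm1 (Z.mulVec βstar) - A + B) ≤ lam * vnorm1 (Z.mulVec βhat) :=
    mul_le_mul_of_nonneg_left hl1hat hlam.le
  have e2 : -((lam / 2) * (A + B)) ≤ g ⬝ᵥ q := by
    have := neg_abs_le (g ⬝ᵥ q)
    linarith [hipbound]
  have hcone : B ≤ 3 * A := by
    have hconeL : lam * B ≤ lam * (3 * A) := by nlinarith [hopt, hl1mul, hXh2, e2]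
    exact le_of_mul_le_mul_left hconeL hlam
  -- Cauchy–Schwarz on T₀
  have hA2 : A ^ 2 ≤ (s:ℝ) * ∑ i ∈ T₀, g i ^ 2 := by
    have hcs := sq_sum_le_card_mul_sum_sq (s := T₀) (f := fun i => |g i|)
    simpa [hs, sq_abs] using hcs
  have hAN : A ≤ Real.sqrt s * N := by
    have h0 : (0:ℝ) ≤ (s:ℝ) := Nat.cast_nonneg s
    have h1 : A = Real.sqrt (A ^ 2) := (Real.sqrt_sq hA0).symm
    rw [h1, hN, vnorm_restr_eq, ← Real.sqrt_mul h0]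
    exact Real.sqrt_le_sqrt hA2
  -- per-block bound
  have hblock : ∀ j ∈ Finset.Icc 2 J,
      vnorm (restr (T j) g) ≤ (∑ b ∈ T (j-1), |g b|) / Real.sqrt l := by
    intro j hj
    rw [Finset.mem_Icc] at hj
    obtain ⟨hj2, hjJ⟩ := hj
    have hcardprev : (T (j-1)).card = l := hCard (j-1) (by omega) (by omega)
    set S := ∑ b ∈ T (j-1), |g b| with hS
    have hS0 : 0 ≤ S := Finset.sum_nonneg fun i _ => abs_nonneg _
    have hptw : ∀ a ∈ T j, |g a| ≤ S / l := by
      intro a ha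
      rw [le_div_iff₀ hll]
      calc |g a| * l = ∑ _b ∈ T (j-1), |g a| := by
            rw [Finset.sum_const, hcardprev, nsmul_eq_mul, mul_comm]
        _ ≤ S := Finset.sum_le_sum fun b hb => hOrder j hj2 hjJ a ha b hb
    have hcardj : (T j).card ≤ l := by
      rcases eq_or_lt_of_le hjJ with hEq | hLt
      · rw [hEq]; exact hCardLast
      · exact le_of_eq (hCard j (by omega) hLt)
    have hsum2 : ∑ a ∈ T j, g a ^ 2 ≤ S ^ 2 / l := by
      have heq : (l:ℝ) * (S / l) ^ 2 = S ^ 2 / l := by field_simp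
      calc ∑ a ∈ T j, g a ^ 2 ≤ ∑ _a ∈ T j, (S / l) ^ 2 := by
            refine Finset.sum_le_sum fun a ha => ?_
            rw [← sq_abs]
            exact pow_le_pow_left₀ (abs_nonneg _) (hptw a ha) 2
        _ = ((T j).card : ℝ) * (S / l) ^ 2 := by rw [Finset.sum_const, nsmul_eq_mul]
        _ ≤ (l:ℝ) * (S / l) ^ 2 := by
            refine mul_le_mul_of_nonneg_right ?_ (sq_nonneg _)
            exact_mod_cast hcardj
        _ = S ^ 2 / l := heq
    rw [vnorm_restr_eq]
    calc Real.sqrt (∑ a ∈ T j, g a ^ 2) ≤ Real.sqrt (S ^ 2 / l) := Real.sqrt_le_sqrt hsum2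
      _ = S / Real.sqrt l := by rw [Real.sqrt_div (sq_nonneg S), Real.sqrt_sq hS0]
  -- summing the blocks
  have hpd : Set.PairwiseDisjoint (↑(Finset.Icc 1 J) : Set ℕ) T := fun i hi j hj hij =>
    hDisj i (Finset.mem_coe.mp hi) j (Finset.mem_coe.mp hj) hij
  have hsumprev : ∑ j ∈ Finset.Icc 2 J, (∑ b ∈ T (j-1), |g b|) ≤ B := by
    have hJ1 : J - 1 + 1 = J := Nat.succ_pred_eq_of_pos hJ
    have hmap : ∑ j ∈ Finset.Icc 2 J, (∑ b ∈ T (j-1), |g b|)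
        = ∑ k ∈ Finset.Icc 1 (J-1), ∑ b ∈ T k, |g b| := by
      rw [show Finset.Icc 2 J = (Finset.Icc 1 (J-1)).map (addRightEmbedding 1) by
            rw [Finset.map_add_right_Icc, hJ1]]
      rw [Finset.sum_map]
      exact Finset.sum_congr rfl fun k _ => by simp [addRightEmbedding]
    have h1 : ∑ k ∈ Finset.Icc 1 (J-1), ∑ b ∈ T k, |g b|
        ≤ ∑ k ∈ Finset.Icc 1 J, ∑ b ∈ T k, |g b| :=
      Finset.sum_le_sum_of_subset_of_nonneg
        (Finset.Icc_subset_Icc_right (Nat.sub_le J 1))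
        (fun k _ _ => Finset.sum_nonneg fun b _ => abs_nonneg _)
    have h2 : ∑ k ∈ Finset.Icc 1 J, ∑ b ∈ T k, |g b| = B := by
      rw [hB, ← hUnion, Finset.sum_biUnion hpd]
    rw [hmap]
    linarith
  -- final chain
  calc ∑ j ∈ Finset.Icc 2 J, vnorm (restr (T j) g)
      ≤ ∑ j ∈ Finset.Icc 2 J, (∑ b ∈ T (j-1), |g b|) / Real.sqrt l :=
        Finset.sum_le_sum hblock
    _ = (∑ j ∈ Finset.Icc 2 J, ∑ b ∈ T (j-1), |g b|) / Real.sqrt l := by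
        rw [Finset.sum_div]
    _ ≤ B / Real.sqrt l := by gcongr
    _ ≤ (3 * A) / Real.sqrt l := by gcongr
    _ ≤ (3 * (Real.sqrt s * N)) / Real.sqrt l := by gcongr
    _ = 3 * Real.sqrt ((s:ℝ) / (l:ℝ)) * N := by
        rw [Real.sqrt_div (Nat.cast_nonneg s)]
        field_simp
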